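/- There exists a constant C > 0, depending only on d₁ and d₂, such that for every x ∈ ℝ^{d₁} × ℝ^{d₂}, every r > 0 and every κ ≥ 0, the Lebesgue measures of Grushin balls satisfy |B^ϱ(x, κ r)| ≤ C (1 + κ)^{Q} |B^ϱ(x, r)|, where Q = d₁ + 2 d₂ is the homogeneous dimension. -/

import Mathlib

open MeasureTheory

/-- The Grushin quasi-distance on `ℝ^{d₁} × ℝ^{d₂}`. -/
noncomputable def grushinDist {d₁ d₂ : ℕ}
    (x y : EuclideanSpace ℝ (Fin d₁) × EuclideanSpace ℝ (Fin d₂)) : ℝ :=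
  if Real.sqrt ‖x.2 - y.2‖ ≤ ‖x.1‖ + ‖y.1‖ then
    ‖x.1 - y.1‖ + ‖x.2 - y.2‖ / (‖x.1‖ + ‖y.1‖)
  else
    ‖x.1 - y.1‖ + Real.sqrt ‖x.2 - y.2‖

/-- The closed Grushin ball `B^ϱ(x, r) = {y : ϱ(x, y) ≤ r}`. -/
def grushinBall {d₁ d₂ : ℕ}
    (x : EuclideanSpace ℝ (Fin d₁) × EuclideanSpace ℝ (Fin d₂)) (r : ℝ) :
    Set (EuclideanSpace ℝ (Fin d₁) × EuclideanSpace ℝ (Fin d₂)) :=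
  {y | grushinDist x y ≤ r}

/-- Doubling property of Grushin balls: `|B^ϱ(x, κ r)| ≤ C (1 + κ)^Q |B^ϱ(x, r)|`
with `Q = d₁ + 2 d₂`, for a constant `C` depending only on `d₁, d₂`. -/
lemma grushinBall_subset_prod {d₁ d₂ : ℕ}
    (x : EuclideanSpace ℝ (Fin d₁) × EuclideanSpace ℝ (Fin d₂)) (R : ℝ) (hR : 0 ≤ R) :
    grushinBall x R ⊆
      Metric.closedBall x.1 R ×ˢ Metric.closedBall x.2 (2 * R * (‖x.1‖ + R)) := by
  intro y hy
  simp only [grushinBall, Set.mem_setOf_eq, grushinDist] at hy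
  have hb : (0:ℝ) ≤ ‖x.2 - y.2‖ := norm_nonneg _
  have hA : (0:ℝ) ≤ ‖x.1‖ := norm_nonneg _
  have hs : (0:ℝ) ≤ ‖x.1‖ + ‖y.1‖ := by positivity
  rw [Set.mem_prod, Metric.mem_closedBall, Metric.mem_closedBall, dist_eq_norm,
    dist_eq_norm, norm_sub_rev y.1 x.1, norm_sub_rev y.2 x.2]
  split_ifs at hy with h
  · have hdiv : (0:ℝ) ≤ ‖x.2 - y.2‖ / (‖x.1‖ + ‖y.1‖) := by positivity
    have h1 : ‖x.1 - y.1‖ ≤ R := by linarith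
    refine ⟨h1, ?_⟩
    rcases eq_or_lt_of_le hs with hs0 | hs0
    · have hsq0 : Real.sqrt ‖x.2 - y.2‖ ≤ 0 := by rw [← hs0] at h; exact h
      have hb0 : ‖x.2 - y.2‖ = 0 := by
        have := Real.sq_sqrt hb
        nlinarith [Real.sqrt_nonneg ‖x.2 - y.2‖]
      rw [hb0]; positivity
    · have hy1 : ‖y.1‖ ≤ ‖x.1‖ + R := by
        have := norm_sub_norm_le y.1 x.1
        rw [norm_sub_rev] at this
        linarith
      have hdR : ‖x.2 - y.2‖ / (‖x.1‖ + ‖y.1‖) ≤ R := by linarith [norm_nonneg (x.1 - y.1)]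
      rw [div_le_iff₀ hs0] at hdR
      nlinarith
  · have hsq : (0:ℝ) ≤ Real.sqrt ‖x.2 - y.2‖ := Real.sqrt_nonneg _
    refine ⟨by linarith, ?_⟩
    have h2 : Real.sqrt ‖x.2 - y.2‖ ≤ R := by linarith [norm_nonneg (x.1 - y.1)]
    nlinarith [Real.sq_sqrt hb]

lemma prod_subset_grushinBall {d₁ d₂ : ℕ}
    (x : EuclideanSpace ℝ (Fin d₁) × EuclideanSpace ℝ (Fin d₂)) (r : ℝ) (hr : 0 < r) :
    Metric.closedBall x.1 (r / 2) ×ˢ Metric.closedBall x.2 (r * (‖x.1‖ + r) / 8) ⊆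
      grushinBall x r := by
  intro y hy
  rw [Set.mem_prod, Metric.mem_closedBall, Metric.mem_closedBall, dist_eq_norm,
    dist_eq_norm, norm_sub_rev y.1 x.1, norm_sub_rev y.2 x.2] at hy
  obtain ⟨h1, h2⟩ := hy
  have hb : (0:ℝ) ≤ ‖x.2 - y.2‖ := norm_nonneg _
  have hA : (0:ℝ) ≤ ‖x.1‖ := norm_nonneg _
  have hy1 : (0:ℝ) ≤ ‖y.1‖ := norm_nonneg _
  simp only [grushinBall, Set.mem_setOf_eq, grushinDist]
  split_ifs with h
  · rcases eq_or_lt_of_le (by positivity : (0:ℝ) ≤ ‖x.1‖ + ‖y.1‖) with hs0 | hs0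
    · rw [← hs0, div_zero]; linarith
    · have hdiv : ‖x.2 - y.2‖ / (‖x.1‖ + ‖y.1‖) ≤ r / 2 := by
        by_cases hAr : ‖x.1‖ ≤ r
        · -- use sqrt bound
          have hb' : ‖x.2 - y.2‖ ≤ (r / 2) ^ 2 := by nlinarith
          rcases eq_or_lt_of_le hb with hb0 | hb0
          · rw [← hb0, zero_div]; positivity
          · have hsb : (0:ℝ) < Real.sqrt ‖x.2 - y.2‖ := Real.sqrt_pos.mpr hb0
            have : ‖x.2 - y.2‖ / (‖x.1‖ + ‖y.1‖) ≤ ‖x.2 - y.2‖ / Real.sqrt ‖x.2 - y.2‖ :=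
              div_le_div_of_nonneg_left hb hsb h
            rw [Real.div_sqrt] at this
            have : Real.sqrt ‖x.2 - y.2‖ ≤ r / 2 := by
              calc Real.sqrt ‖x.2 - y.2‖ ≤ Real.sqrt ((r/2)^2) := Real.sqrt_le_sqrt hb'
                _ = r / 2 := Real.sqrt_sq (by linarith)
            linarith [div_le_div_of_nonneg_left hb hsb h, Real.div_sqrt (x := ‖x.2 - y.2‖)]
        · push_neg at hAr
          have hA0 : (0:ℝ) < ‖x.1‖ := lt_trans hr hAr
          have : ‖x.2 - y.2‖ / (‖x.1‖ + ‖y.1‖) ≤ ‖x.2 - y.2‖ / ‖x.1‖ :=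
            div_le_div_of_nonneg_left hb hA0 (by linarith)
          have h3 : ‖x.2 - y.2‖ / ‖x.1‖ ≤ r / 4 := by
            rw [div_le_iff₀ hA0]
            nlinarith
          linarith
      linarith
  · push_neg at h
    have hAr : ‖x.1‖ < r := by
      by_contra hc
      push_neg at hc
      have hA0 : (0:ℝ) < ‖x.1‖ := lt_of_lt_of_le hr hc
      have hgt : ‖x.1‖ ^ 2 < ‖x.2 - y.2‖ := by
        have h' : ‖x.1‖ < Real.sqrt ‖x.2 - y.2‖ := by linarith
        nlinarith [Real.sq_sqrt hb, Real.sqrt_nonneg ‖x.2 - y.2‖]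
      nlinarith
    have hb' : ‖x.2 - y.2‖ ≤ (r / 2) ^ 2 := by nlinarith
    have : Real.sqrt ‖x.2 - y.2‖ ≤ r / 2 := by
      calc Real.sqrt ‖x.2 - y.2‖ ≤ Real.sqrt ((r/2)^2) := Real.sqrt_le_sqrt hb'
        _ = r / 2 := Real.sqrt_sq (by linarith)
    linarith

theorem grushinBall_doubling (d₁ d₂ : ℕ) (hd₁ : 1 ≤ d₁) (hd₂ : 1 ≤ d₂) :
    ∃ C : ℝ, 0 < C ∧
      ∀ (x : EuclideanSpace ℝ (Fin d₁) × EuclideanSpace ℝ (Fin d₂)) (r κ : ℝ),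
        0 < r → 0 ≤ κ →
        volume (grushinBall x (κ * r)) ≤
          ENNReal.ofReal (C * (1 + κ) ^ (d₁ + 2 * d₂)) * volume (grushinBall x r) := by
  refine ⟨2 ^ d₁ * 16 ^ d₂, by positivity, fun x r κ hr hκ => ?_⟩
  set A := ‖x.1‖ with hAdef
  have hA0 : (0:ℝ) ≤ A := norm_nonneg _
  set v₁ := volume (Metric.ball (0 : EuclideanSpace ℝ (Fin d₁)) 1) with hv₁
  set v₂ := volume (Metric.ball (0 : EuclideanSpace ℝ (Fin d₂)) 1) with hv₂
  have e₁ : ∀ s : ℝ, 0 ≤ s →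
      volume (Metric.closedBall x.1 s) = ENNReal.ofReal (s ^ d₁) * v₁ := fun s hs => by
    rw [hv₁, Measure.addHaar_closedBall _ _ hs, finrank_euclideanSpace_fin]
  have e₂ : ∀ s : ℝ, 0 ≤ s →
      volume (Metric.closedBall x.2 s) = ENNReal.ofReal (s ^ d₂) * v₂ := fun s hs => by
    rw [hv₂, Measure.addHaar_closedBall _ _ hs, finrank_euclideanSpace_fin]
  have hout : volume (grushinBall x (κ * r)) ≤
      ENNReal.ofReal ((κ * r) ^ d₁) * v₁ *
        (ENNReal.ofReal ((2 * (κ * r) * (A + κ * r)) ^ d₂) * v₂) := by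
    refine le_trans (measure_mono (grushinBall_subset_prod x (κ * r) (by positivity))) ?_
    rw [Measure.volume_eq_prod, Measure.prod_prod, e₁ _ (by positivity), e₂ _ (by positivity)]
  have hin : ENNReal.ofReal ((r / 2) ^ d₁) * v₁ *
      (ENNReal.ofReal ((r * (A + r) / 8) ^ d₂) * v₂) ≤ volume (grushinBall x r) := by
    refine le_trans ?_ (measure_mono (prod_subset_grushinBall x r hr))
    rw [Measure.volume_eq_prod, Measure.prod_prod, e₁ _ (by positivity), e₂ _ (by positivity)]
  have hreal : (κ * r) ^ d₁ * (2 * (κ * r) * (A + κ * r)) ^ d₂ ≤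
      (2 ^ d₁ * 16 ^ d₂ * (1 + κ) ^ (d₁ + 2 * d₂)) *
        ((r / 2) ^ d₁ * (r * (A + r) / 8) ^ d₂) := by
    have h1 : (κ * r) ^ d₁ ≤ ((1 + κ) * r) ^ d₁ :=
      pow_le_pow_left₀ (by positivity) (by nlinarith) d₁
    have h2 : (2 * (κ * r) * (A + κ * r)) ^ d₂ ≤ (2 * (1 + κ) ^ 2 * (r * (A + r))) ^ d₂ :=
      pow_le_pow_left₀ (by positivity)
        (by nlinarith [mul_nonneg (mul_nonneg hr.le hA0) hκ, mul_nonneg hr.le hA0,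
          mul_nonneg (mul_nonneg hr.le hr.le) hκ,
          mul_nonneg (mul_nonneg hr.le hA0) (mul_nonneg hκ hκ)]) d₂
    calc (κ * r) ^ d₁ * (2 * (κ * r) * (A + κ * r)) ^ d₂
        ≤ ((1 + κ) * r) ^ d₁ * (2 * (1 + κ) ^ 2 * (r * (A + r))) ^ d₂ :=
          mul_le_mul h1 h2 (by positivity) (by positivity)
      _ = (2 ^ d₁ * 16 ^ d₂ * (1 + κ) ^ (d₁ + 2 * d₂)) *
            ((r / 2) ^ d₁ * (r * (A + r) / 8) ^ d₂) := by
          have h16 : (16:ℝ) ^ d₂ = 2 ^ d₂ * 8 ^ d₂ := by rw [← mul_pow]; norm_num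
          simp only [pow_add, pow_mul, h16, mul_pow, div_pow]
          field_simp
  calc volume (grushinBall x (κ * r))
      ≤ ENNReal.ofReal ((κ * r) ^ d₁) * v₁ *
        (ENNReal.ofReal ((2 * (κ * r) * (A + κ * r)) ^ d₂) * v₂) := hout
    _ = ENNReal.ofReal ((κ * r) ^ d₁) * ENNReal.ofReal ((2 * (κ * r) * (A + κ * r)) ^ d₂) *
          (v₁ * v₂) := by ac_rfl
    _ = ENNReal.ofReal ((κ * r) ^ d₁ * (2 * (κ * r) * (A + κ * r)) ^ d₂) * (v₁ * v₂) := by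
        rw [ENNReal.ofReal_mul (by positivity)]
    _ ≤ ENNReal.ofReal ((2 ^ d₁ * 16 ^ d₂ * (1 + κ) ^ (d₁ + 2 * d₂)) *
          ((r / 2) ^ d₁ * (r * (A + r) / 8) ^ d₂)) * (v₁ * v₂) :=
        mul_le_mul_left (ENNReal.ofReal_le_ofReal hreal) _
    _ = ENNReal.ofReal (2 ^ d₁ * 16 ^ d₂ * (1 + κ) ^ (d₁ + 2 * d₂)) *
          (ENNReal.ofReal ((r / 2) ^ d₁) * v₁ * (ENNReal.ofReal ((r * (A + r) / 8) ^ d₂) * v₂)) := by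
        rw [ENNReal.ofReal_mul (by positivity : (0:ℝ) ≤ 2 ^ d₁ * 16 ^ d₂ * (1 + κ) ^ (d₁ + 2 * d₂)),
          ENNReal.ofReal_mul (by positivity : (0:ℝ) ≤ (r / 2) ^ d₁)]
        ac_rfl
    _ ≤ ENNReal.ofReal (2 ^ d₁ * 16 ^ d₂ * (1 + κ) ^ (d₁ + 2 * d₂)) *
          volume (grushinBall x r) := mul_le_mul_right hin _
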